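/- arXiv:2203.01897 — 2 statements merged into one kernel-verified Lean document; each statement's English description precedes it below -/
import Mathlib

section
/- Let φ be any norm on ℝ^d and let α ∈ (0,1). Define, for each positive definite d×d real matrix Σ, the quantile c_α(Σ) := inf{ c > 0 : μ_Σ{t ∈ ℝ^d : φ(t) < c} ≥ 1 − α }. Then the map Σ ↦ c_α(Σ) is continuous on the set of positive definite d×d real matrices. -/
open MeasureTheory Matrix Filter
open scoped ENNReal Topology
open Set

/-- Centered Gaussian density on `ℝ^d` with covariance matrix `S`:
`f_S(x) = ((2π)^d det S)^(−1/2) · exp(−(1/2) xᵀ S⁻¹ x)`. -/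
noncomputable def gaussDensity {d : ℕ} (S : Matrix (Fin d) (Fin d) ℝ) (x : Fin d → ℝ) : ℝ :=
  (Real.sqrt ((2 * Real.pi) ^ d * S.det))⁻¹ *
    Real.exp (-(1 / 2) * (x ⬝ᵥ (S⁻¹ *ᵥ x)))

/-- Centered Gaussian measure on `ℝ^d`: the measure with density `gaussDensity S`
with respect to Lebesgue measure. -/
noncomputable def gaussMeasure {d : ℕ} (S : Matrix (Fin d) (Fin d) ℝ) :
    Measure (Fin d → ℝ) :=
  volume.withDensity fun x => ENNReal.ofReal (gaussDensity S x)

/-- `φ` is a norm on `ℝ^d`: point-separating, absolutely homogeneous, subadditive. -/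
structure IsNorm {d : ℕ} (φ : (Fin d → ℝ) → ℝ) : Prop where
  eq_zero : ∀ x, φ x = 0 → x = 0
  smul : ∀ (a : ℝ) (x : Fin d → ℝ), φ (a • x) = |a| * φ x
  triangle : ∀ x y : Fin d → ℝ, φ (x + y) ≤ φ x + φ y

/-- The quantile `c_α(Σ) = inf{ c > 0 : μ_Σ{t : φ(t) < c} ≥ 1 − α }`. -/
noncomputable def gaussQuantile {d : ℕ} (φ : (Fin d → ℝ) → ℝ) (α : ℝ)
    (S : Matrix (Fin d) (Fin d) ℝ) : ℝ :=
  sInf {c : ℝ | 0 < c ∧ ENNReal.ofReal (1 - α) ≤ gaussMeasure S {t : Fin d → ℝ | φ t < c}}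


namespace IsNorm
variable {d : ℕ} {φ : (Fin d → ℝ) → ℝ}

lemma zero (hφ : IsNorm φ) : φ 0 = 0 := by
  have := hφ.smul 0 0; simpa using this

lemma nonneg (hφ : IsNorm φ) (x : Fin d → ℝ) : 0 ≤ φ x := by
  have h := hφ.triangle x (-x)
  have h2 : φ (-x) = φ x := by
    have := hφ.smul (-1) x; simpa using this
  have h0 : φ (x + -x) = 0 := by simpa using hφ.zero
  nlinarith

lemma pos (hφ : IsNorm φ) {x : Fin d → ℝ} (hx : x ≠ 0) : 0 < φ x :=
  lt_of_le_of_ne (hφ.nonneg x) fun h => hx (hφ.eq_zero x h.symm)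

lemma le_norm (hφ : IsNorm φ) : ∃ C : ℝ, 0 ≤ C ∧ ∀ x, φ x ≤ C * ‖x‖ := by
  refine ⟨∑ i, φ (Pi.single i 1), Finset.sum_nonneg fun i _ => hφ.nonneg _, fun x => ?_⟩
  have hx : x = ∑ i, x i • (Pi.single i (1:ℝ) : Fin d → ℝ) := by
    funext j
    simp [Finset.sum_apply, Pi.single_apply]
  calc φ x = φ (∑ i, x i • (Pi.single i (1:ℝ) : Fin d → ℝ)) := by rw [← hx]
    _ ≤ ∑ i, φ (x i • (Pi.single i (1:ℝ) : Fin d → ℝ)) :=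
        Finset.le_sum_of_subadditive φ hφ.zero.le hφ.triangle _ _
    _ = ∑ i, |x i| * φ (Pi.single i (1:ℝ)) := by simp [hφ.smul]
    _ ≤ ∑ i, ‖x‖ * φ (Pi.single i (1:ℝ)) := by
        refine Finset.sum_le_sum fun i _ => ?_
        have := norm_le_pi_norm x i
        exact mul_le_mul_of_nonneg_right (by simpa using this) (hφ.nonneg _)
    _ = (∑ i, φ (Pi.single i 1)) * ‖x‖ := by rw [← Finset.mul_sum, mul_comm]

lemma continuous (hφ : IsNorm φ) : Continuous φ := by
  obtain ⟨C, hC0, hC⟩ := hφ.le_norm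
  rw [Metric.continuous_iff]
  intro x ε hε
  rcases eq_or_lt_of_le hC0 with h | h
  · refine ⟨1, one_pos, fun y _ => ?_⟩
    have h1 : φ y ≤ 0 := (hC y).trans (by rw [← h]; simp)
    have h2 : φ x ≤ 0 := (hC x).trans (by rw [← h]; simp)
    have := hφ.nonneg y; have := hφ.nonneg x
    simp only [Real.dist_eq]
    have : φ y = φ x := by linarith
    simpa [this] using hε
  · refine ⟨ε / C, div_pos hε h, fun y hy => ?_⟩
    have key : ∀ a b : Fin d → ℝ, φ a - φ b ≤ C * ‖a - b‖ := by
      intro a b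
      have h3 := hφ.triangle (a - b) b
      simp only [sub_add_cancel] at h3
      have := hC (a - b); linarith
    have h1 := key y x
    have h2 := key x y
    rw [show x - y = -(y - x) by ring, norm_neg] at h2
    rw [Real.dist_eq, abs_sub_lt_iff]
    have hd : ‖y - x‖ = dist y x := by rw [dist_eq_norm]
    rw [hd] at h1 h2
    have hy' : C * dist y x < ε := by
      rw [mul_comm]; exact (lt_div_iff₀ h).mp hy
    constructor <;> linarith

lemma convex_ball (hφ : IsNorm φ) (c : ℝ) : Convex ℝ {x : Fin d → ℝ | φ x < c} := by
  intro x hx y hy a b ha hb hab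
  simp only [Set.mem_setOf_eq] at *
  calc φ (a • x + b • y) ≤ φ (a • x) + φ (b • y) := hφ.triangle _ _
    _ = |a| * φ x + |b| * φ y := by rw [hφ.smul, hφ.smul]
    _ = a * φ x + b * φ y := by rw [abs_of_nonneg ha, abs_of_nonneg hb]
    _ < c := by
        rcases eq_or_lt_of_le ha with h | h
        · have hb1 : b = 1 := by linarith
          rw [← h, hb1]; simpa using hy
        · have h1 : a * φ x < a * c := mul_lt_mul_of_pos_left hx h
          have h2 : b * φ y ≤ b * c := mul_le_mul_of_nonneg_left hy.le hb
          have h3 : a * c + b * c = c := by rw [← add_mul, hab, one_mul]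
          linarith

end IsNorm

section Quadratic
variable {d : ℕ}

lemma abs_dotProduct_mulVec_le (M : Matrix (Fin d) (Fin d) ℝ) (x : Fin d → ℝ) :
    |x ⬝ᵥ M *ᵥ x| ≤ (∑ i, ∑ j, |M i j|) * ‖x‖ ^ 2 := by
  rw [dotProduct]
  refine (Finset.abs_sum_le_sum_abs _ _).trans ?_
  rw [Finset.sum_mul]
  refine Finset.sum_le_sum fun i _ => ?_
  rw [abs_mul]
  have h1 : |x i| ≤ ‖x‖ := by simpa using norm_le_pi_norm x i
  have h2 : |(M *ᵥ x) i| ≤ (∑ j, |M i j|) * ‖x‖ := by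
    rw [mulVec, dotProduct]
    refine (Finset.abs_sum_le_sum_abs _ _).trans ?_
    rw [Finset.sum_mul]
    refine Finset.sum_le_sum fun j _ => ?_
    rw [abs_mul]
    exact mul_le_mul_of_nonneg_left (by simpa using norm_le_pi_norm x j) (abs_nonneg _)
  calc |x i| * |(M *ᵥ x) i| ≤ ‖x‖ * ((∑ j, |M i j|) * ‖x‖) :=
        mul_le_mul h1 h2 (abs_nonneg _) (norm_nonneg _)
    _ = (∑ j, |M i j|) * ‖x‖ ^ 2 := by ring

lemma posDef_quad_lower {M : Matrix (Fin d) (Fin d) ℝ} (hM : M.PosDef) :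
    ∃ m : ℝ, 0 < m ∧ ∀ x, m * ‖x‖ ^ 2 ≤ x ⬝ᵥ M *ᵥ x := by
  have hQ : Continuous fun x : Fin d → ℝ => x ⬝ᵥ M *ᵥ x :=
    continuous_id.dotProduct (continuous_const.matrix_mulVec continuous_id)
  have hpos : ∀ x : Fin d → ℝ, x ≠ 0 → 0 < x ⬝ᵥ M *ᵥ x := by
    intro x hx
    have := hM.dotProduct_mulVec_pos hx
    simpa using this
  by_cases hne : (Metric.sphere (0 : Fin d → ℝ) 1).Nonempty
  · obtain ⟨u₀, hu₀, hmin⟩ := (isCompact_sphere (0 : Fin d → ℝ) 1).exists_isMinOn hne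
      hQ.continuousOn
    have hu₀ne : u₀ ≠ 0 := by
      intro h
      rw [mem_sphere_zero_iff_norm, h] at hu₀
      simpa using hu₀
    refine ⟨u₀ ⬝ᵥ M *ᵥ u₀, hpos u₀ hu₀ne, fun x => ?_⟩
    by_cases hx : x = 0
    · simp [hx]
    · have hxn : ‖x‖ ≠ 0 := norm_ne_zero_iff.mpr hx
      set u := ‖x‖⁻¹ • x with hu
      have hus : u ∈ Metric.sphere (0 : Fin d → ℝ) 1 := by
        rw [mem_sphere_zero_iff_norm, norm_smul]
        simp [abs_of_nonneg (norm_nonneg x), inv_mul_cancel₀ hxn]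
      have hscale : x ⬝ᵥ M *ᵥ x = ‖x‖ ^ 2 * (u ⬝ᵥ M *ᵥ u) := by
        rw [hu, smul_dotProduct, mulVec_smul, dotProduct_smul]
        field_simp
        rw [smul_eq_mul, smul_eq_mul]; field_simp
      have := hmin hus
      calc (u₀ ⬝ᵥ M *ᵥ u₀) * ‖x‖ ^ 2 ≤ (u ⬝ᵥ M *ᵥ u) * ‖x‖ ^ 2 := by
            exact mul_le_mul_of_nonneg_right this (sq_nonneg _)
        _ = x ⬝ᵥ M *ᵥ x := by rw [hscale]; ring
  · refine ⟨1, one_pos, fun x => ?_⟩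
    by_cases hx : x = 0
    · simp [hx]
    · exact absurd ⟨‖x‖⁻¹ • x, by
        rw [mem_sphere_zero_iff_norm, norm_smul]
        simp [abs_of_nonneg (norm_nonneg x), inv_mul_cancel₀ (norm_ne_zero_iff.mpr hx)]⟩ hne

end Quadratic

section Total
variable {d : ℕ} {S : Matrix (Fin d) (Fin d) ℝ}

lemma continuous_quadform (M : Matrix (Fin d) (Fin d) ℝ) :
    Continuous fun x : Fin d → ℝ => x ⬝ᵥ M *ᵥ x :=
  continuous_id.dotProduct (continuous_const.matrix_mulVec continuous_id)

lemma continuous_gaussDensity (S : Matrix (Fin d) (Fin d) ℝ) :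
    Continuous (gaussDensity S) :=
  continuous_const.mul ((continuous_const.mul (continuous_quadform S⁻¹)).rexp)

lemma gaussDensity_pos (hS : S.PosDef) (x : Fin d → ℝ) : 0 < gaussDensity S x := by
  apply mul_pos
  · rw [inv_pos]
    apply Real.sqrt_pos.2
    apply mul_pos (pow_pos (by positivity) d) hS.det_pos
  · exact Real.exp_pos _

-- the standard gaussian lintegral
lemma lintegral_std_gauss :
    ∫⁻ y : Fin d → ℝ, ENNReal.ofReal (Real.exp (-(1/2) * (y ⬝ᵥ y))) =
      ENNReal.ofReal ((Real.sqrt (2 * Real.pi)) ^ d) := by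
  have hint : Integrable fun y : Fin d → ℝ => ∏ i, Real.exp (-(1/2) * (y i)^2) :=
    Integrable.fintype_prod fun _ =>
      integrable_exp_neg_mul_sq (by norm_num : (0:ℝ) < 1/2)
  have heq : ∀ y : Fin d → ℝ, Real.exp (-(1/2) * (y ⬝ᵥ y)) =
      ∏ i, Real.exp (-(1/2) * (y i)^2) := by
    intro y
    rw [← Real.exp_sum, dotProduct, Finset.mul_sum]
    congr 1
    refine Finset.sum_congr rfl fun i _ => by ring
  calc ∫⁻ y : Fin d → ℝ, ENNReal.ofReal (Real.exp (-(1/2) * (y ⬝ᵥ y)))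
      = ∫⁻ y : Fin d → ℝ, ENNReal.ofReal (∏ i, Real.exp (-(1/2) * (y i)^2)) := by
        simp_rw [heq]
    _ = ENNReal.ofReal (∫ y : Fin d → ℝ, ∏ i, Real.exp (-(1/2) * (y i)^2)) := by
        rw [← ofReal_integral_eq_lintegral_ofReal hint]
        exact Filter.Eventually.of_forall fun y =>
          Finset.prod_nonneg fun i _ => (Real.exp_pos _).le
    _ = ENNReal.ofReal ((Real.sqrt (2 * Real.pi)) ^ d) := by
        rw [MeasureTheory.volume_pi, MeasureTheory.integral_fintype_prod_eq_pow (ι := Fin d)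
          (f := fun t : ℝ => Real.exp (-(1/2) * t^2))]
        congr 1
        rw [show ∫ t : ℝ, Real.exp (-(1/2) * t^2) = Real.sqrt (Real.pi / (1/2)) from
          integral_gaussian (1/2)]
        norm_num
        rw [mul_comm (Real.sqrt Real.pi)]

open scoped MatrixOrder in
lemma lintegral_gaussDensity (hS : S.PosDef) :
    ∫⁻ x, ENNReal.ofReal (gaussDensity S x) = 1 := by
  classical
  set B := CFC.sqrt S with hBdef
  have hBB : B * B = S := CFC.sqrt_mul_sqrt_self S hS.posSemidef.nonneg
  have hdet2 : B.det * B.det = S.det := by rw [← det_mul, hBB]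
  have hSdet : 0 < S.det := hS.det_pos
  have hdetB : B.det ≠ 0 := by
    intro h; rw [h, mul_zero] at hdet2; exact hSdet.ne hdet2
  have habs : |B.det| = Real.sqrt S.det := by
    rw [← hdet2, ← abs_mul_abs_self B.det, Real.sqrt_mul_self (abs_nonneg _)]
  have hBT : Bᵀ = B := by
    rw [← conjTranspose_eq_transpose_of_trivial]; exact (CFC.sqrt_nonneg S).posSemidef.1
  have hunit : IsUnit B.det := isUnit_iff_ne_zero.2 hdetB
  have hSinv : S⁻¹ = B⁻¹ * B⁻¹ := by rw [← hBB, Matrix.mul_inv_rev]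
  have key : ∀ y : Fin d → ℝ, (B *ᵥ y) ⬝ᵥ S⁻¹ *ᵥ (B *ᵥ y) = y ⬝ᵥ y := by
    intro y
    have h1 : S⁻¹ *ᵥ (B *ᵥ y) = B⁻¹ *ᵥ y := by
      rw [mulVec_mulVec, hSinv, Matrix.mul_assoc, Matrix.nonsing_inv_mul B hunit,
        Matrix.mul_one]
    rw [h1, dotProduct_mulVec, ← vecMul_transpose, vecMul_vecMul, hBT,
      Matrix.mul_nonsing_inv B hunit, vecMul_one]
  -- change of variables
  have hmap := Real.map_matrix_volume_pi_eq_smul_volume_pi hdetB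
  rw [abs_inv] at hmap
  have hfm : Measurable fun x : Fin d → ℝ =>
      ENNReal.ofReal (Real.exp (-(1/2) * (x ⬝ᵥ S⁻¹ *ᵥ x))) :=
    (ENNReal.continuous_ofReal.comp
      ((continuous_const.mul (continuous_quadform S⁻¹)).rexp)).measurable
  have hLmeas : Measurable (Matrix.toLin' B) :=
    (Matrix.toLin' B).continuous_of_finiteDimensional.measurable
  have hcomp : ∫⁻ x, ENNReal.ofReal (Real.exp (-(1/2) * (x ⬝ᵥ S⁻¹ *ᵥ x)))
        ∂(Measure.map (Matrix.toLin' B) volume)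
      = ENNReal.ofReal ((Real.sqrt (2 * Real.pi)) ^ d) := by
    rw [lintegral_map hfm hLmeas]
    simp_rw [Matrix.toLin'_apply, key]
    exact lintegral_std_gauss
  rw [hmap, lintegral_smul_measure, smul_eq_mul] at hcomp
  -- now solve for the integral
  have hdetpos : 0 < |B.det| := abs_pos.2 hdetB
  have hEexp : ∫⁻ x, ENNReal.ofReal (Real.exp (-(1/2) * (x ⬝ᵥ S⁻¹ *ᵥ x)))
      = ENNReal.ofReal (|B.det| * (Real.sqrt (2 * Real.pi)) ^ d) := by
    have := congrArg (fun z => ENNReal.ofReal |B.det| * z) hcomp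
    rw [← mul_assoc, ← ENNReal.ofReal_mul hdetpos.le,
      mul_inv_cancel₀ hdetpos.ne', ENNReal.ofReal_one, one_mul] at this
    rw [this, ← ENNReal.ofReal_mul hdetpos.le]
  -- unfold gaussDensity
  have hconst : (0:ℝ) ≤ (Real.sqrt ((2 * Real.pi) ^ d * S.det))⁻¹ := by positivity
  calc ∫⁻ x, ENNReal.ofReal (gaussDensity S x)
      = ∫⁻ x, ENNReal.ofReal ((Real.sqrt ((2 * Real.pi) ^ d * S.det))⁻¹)
          * ENNReal.ofReal (Real.exp (-(1/2) * (x ⬝ᵥ S⁻¹ *ᵥ x))) := by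
        congr 1; funext x
        rw [gaussDensity, ENNReal.ofReal_mul hconst]
    _ = ENNReal.ofReal ((Real.sqrt ((2 * Real.pi) ^ d * S.det))⁻¹)
          * ENNReal.ofReal (|B.det| * (Real.sqrt (2 * Real.pi)) ^ d) := by
        rw [lintegral_const_mul _ hfm, hEexp]
    _ = 1 := by
        rw [← ENNReal.ofReal_mul hconst, habs]
        have h2pi : (0:ℝ) ≤ 2 * Real.pi := by positivity
        have hsq : Real.sqrt ((2 * Real.pi) ^ d * S.det)
            = (Real.sqrt (2 * Real.pi)) ^ d * Real.sqrt S.det := by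
          have h1 : ((2 * Real.pi)^d) = (Real.sqrt (2 * Real.pi) ^ d)^2 := by
            rw [← pow_mul, mul_comm d 2, pow_mul, Real.sq_sqrt h2pi]
          rw [Real.sqrt_mul (pow_nonneg h2pi d), h1,
            Real.sqrt_sq (pow_nonneg (Real.sqrt_nonneg _) _)]
        rw [hsq]
        have hse : (0:ℝ) < (Real.sqrt (2 * Real.pi)) ^ d := by
          apply pow_pos; exact Real.sqrt_pos.2 (by positivity)
        have hsd : (0:ℝ) < Real.sqrt S.det := Real.sqrt_pos.2 hSdet
        rw [show ((Real.sqrt (2 * Real.pi)) ^ d * Real.sqrt S.det)⁻¹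
            * (Real.sqrt S.det * (Real.sqrt (2 * Real.pi)) ^ d) = 1 by
          rw [mul_comm (Real.sqrt S.det)]
          exact inv_mul_cancel₀ (by positivity)]
        exact ENNReal.ofReal_one

lemma gaussMeasure_univ (hS : S.PosDef) : gaussMeasure S Set.univ = 1 := by
  rw [gaussMeasure, withDensity_apply _ MeasurableSet.univ, Measure.restrict_univ]
  exact lintegral_gaussDensity hS

end Total

section Cont
variable {d : ℕ} {S₀ : Matrix (Fin d) (Fin d) ℝ}

lemma continuousAt_inv_matrix (hS₀ : S₀.PosDef) :
    ContinuousAt (fun S : Matrix (Fin d) (Fin d) ℝ => S⁻¹) S₀ := by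
  apply continuousAt_matrix_inv
  rw [show (Ring.inverse : ℝ → ℝ) = Inv.inv from Ring.inverse_eq_inv']
  exact continuousAt_inv₀ hS₀.det_pos.ne'

lemma continuousAt_gaussDensity (hS₀ : S₀.PosDef) (x : Fin d → ℝ) :
    ContinuousAt (fun S => gaussDensity S x) S₀ := by
  have hdet : ContinuousAt (fun S : Matrix (Fin d) (Fin d) ℝ => S.det) S₀ :=
    continuous_id.matrix_det.continuousAt
  have h1 : ContinuousAt
      (fun S : Matrix (Fin d) (Fin d) ℝ => (Real.sqrt ((2 * Real.pi) ^ d * S.det))⁻¹) S₀ := by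
    have hpos : Real.sqrt ((2 * Real.pi) ^ d * S₀.det) ≠ 0 := by
      refine (Real.sqrt_pos.2 ?_).ne'
      exact mul_pos (pow_pos (by positivity) d) hS₀.det_pos
    exact ((Real.continuous_sqrt.continuousAt.comp
      ((continuousAt_const.mul hdet))).inv₀ hpos)
  have h2 : ContinuousAt
      (fun S : Matrix (Fin d) (Fin d) ℝ =>
        Real.exp (-(1 / 2) * (x ⬝ᵥ (S⁻¹ *ᵥ x)))) S₀ := by
    apply Real.continuous_exp.continuousAt.comp
    apply ContinuousAt.mul continuousAt_const
    exact ((continuous_const.dotProduct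
      (continuous_id.matrix_mulVec continuous_const)).continuousAt).comp
      (continuousAt_inv_matrix hS₀)
  exact h1.mul h2

lemma tendsto_gaussMeasure (hd : 0 < d) (hS₀ : S₀.PosDef) {B : Set (Fin d → ℝ)}
    (hB : MeasurableSet B) :
    Tendsto (fun S => gaussMeasure S B) (𝓝[{S : Matrix (Fin d) (Fin d) ℝ | S.PosDef}] S₀)
      (𝓝 (gaussMeasure S₀ B)) := by
  haveI : FirstCountableTopology (Matrix (Fin d) (Fin d) ℝ) :=
    inferInstanceAs (FirstCountableTopology (Fin d → Fin d → ℝ))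
  obtain ⟨m, hm, hlow⟩ := posDef_quad_lower hS₀.inv
  set C : ℝ := (Real.sqrt ((2 * Real.pi) ^ d * (S₀.det / 2)))⁻¹ with hC
  have hCpos : 0 < C := by
    rw [hC, inv_pos]
    exact Real.sqrt_pos.2 (mul_pos (pow_pos (by positivity) d) (by linarith [hS₀.det_pos]))
  set g : (Fin d → ℝ) → ℝ := fun x => C * ∏ i, Real.exp (-(m / (4 * d)) * (x i) ^ 2) with hg
  have hgint : Integrable g := by
    apply Integrable.const_mul
    exact Integrable.fintype_prod fun _ =>
      integrable_exp_neg_mul_sq (by positivity : (0:ℝ) < m / (4 * d))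
  have hgnonneg : ∀ x, 0 ≤ g x := fun x =>
    mul_nonneg hCpos.le (Finset.prod_nonneg fun i _ => (Real.exp_pos _).le)
  -- the measure rewrite
  have happly : ∀ S : Matrix (Fin d) (Fin d) ℝ,
      gaussMeasure S B = ∫⁻ x in B, ENNReal.ofReal (gaussDensity S x) := fun S => by
    rw [gaussMeasure, withDensity_apply _ hB]
  simp_rw [happly]
  -- dominated convergence
  apply tendsto_lintegral_filter_of_dominated_convergence (fun x => ENNReal.ofReal (g x))
  · exact Eventually.of_forall fun S =>
      (ENNReal.continuous_ofReal.comp (continuous_gaussDensity S)).measurable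
  · -- bound
    have hFc : Continuous (fun M : Matrix (Fin d) (Fin d) ℝ =>
        ∑ i, ∑ j, |(M - S₀⁻¹) i j|) := by
      refine continuous_finset_sum _ fun i _ => continuous_finset_sum _ fun j _ => ?_
      exact ((continuous_id.matrix_elem i j).sub continuous_const).abs
    have hsum : ContinuousAt (fun S : Matrix (Fin d) (Fin d) ℝ =>
        ∑ i, ∑ j, |(S⁻¹ - S₀⁻¹) i j|) S₀ :=
      hFc.continuousAt.comp (continuousAt_inv_matrix hS₀)
    have hsum0 : (∑ i, ∑ j, |(S₀⁻¹ - S₀⁻¹) i j|) = 0 := by simp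
    have hev1 : ∀ᶠ S in 𝓝[{S : Matrix (Fin d) (Fin d) ℝ | S.PosDef}] S₀,
        ∑ i, ∑ j, |(S⁻¹ - S₀⁻¹) i j| < m / 2 := by
      apply eventually_nhdsWithin_of_eventually_nhds
      apply hsum.tendsto.eventually_lt_const
      rw [hsum0]; positivity
    have hev2 : ∀ᶠ S in 𝓝[{S : Matrix (Fin d) (Fin d) ℝ | S.PosDef}] S₀,
        S₀.det / 2 < S.det := by
      apply eventually_nhdsWithin_of_eventually_nhds
      exact continuous_id.matrix_det.continuousAt.tendsto.eventually_const_lt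
        (half_lt_self hS₀.det_pos)
    filter_upwards [hev1, hev2] with S h1 h2
    refine Eventually.of_forall fun x => ENNReal.ofReal_le_ofReal ?_
    -- pointwise bound
    have hquad : m / 2 * ‖x‖ ^ 2 ≤ x ⬝ᵥ S⁻¹ *ᵥ x := by
      have hdec : x ⬝ᵥ S⁻¹ *ᵥ x
          = x ⬝ᵥ S₀⁻¹ *ᵥ x + x ⬝ᵥ (S⁻¹ - S₀⁻¹) *ᵥ x := by
        rw [Matrix.sub_mulVec, dotProduct_sub]; ring
      have habs := abs_dotProduct_mulVec_le (S⁻¹ - S₀⁻¹) x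
      have h3 : (∑ i, ∑ j, |(S⁻¹ - S₀⁻¹) i j|) * ‖x‖ ^ 2 ≤ m / 2 * ‖x‖ ^ 2 :=
        mul_le_mul_of_nonneg_right h1.le (sq_nonneg _)
      have h4 := hlow x
      have h5 : -(m / 2 * ‖x‖ ^ 2) ≤ x ⬝ᵥ (S⁻¹ - S₀⁻¹) *ᵥ x := by
        have := neg_abs_le (x ⬝ᵥ (S⁻¹ - S₀⁻¹) *ᵥ x)
        linarith
      rw [hdec]; linarith
    have hexp : Real.exp (-(1 / 2) * (x ⬝ᵥ S⁻¹ *ᵥ x))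
        ≤ ∏ i, Real.exp (-(m / (4 * d)) * (x i) ^ 2) := by
      rw [← Real.exp_sum]
      apply Real.exp_le_exp.2
      have hsumsq : ∑ i, (x i) ^ 2 ≤ (d : ℝ) * ‖x‖ ^ 2 := by
        calc ∑ i, (x i) ^ 2 ≤ ∑ _i : Fin d, ‖x‖ ^ 2 := by
              refine Finset.sum_le_sum fun i _ => ?_
              have hxi : |x i| ≤ ‖x‖ := by simpa using norm_le_pi_norm x i
              calc (x i) ^ 2 = |x i| ^ 2 := (sq_abs _).symm
                _ ≤ ‖x‖ ^ 2 := by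
                    exact pow_le_pow_left₀ (abs_nonneg _) hxi 2
          _ = (d : ℝ) * ‖x‖ ^ 2 := by simp [Finset.sum_const, mul_comm]
      have hds : ∑ i, -(m / (4 * d)) * (x i) ^ 2
          = -(m / (4 * d)) * ∑ i, (x i) ^ 2 := by
        rw [Finset.mul_sum]
      rw [hds]
      have hd' : (0:ℝ) < d := by exact_mod_cast hd
      have : m / (4 * d) * (∑ i, (x i) ^ 2) ≤ m / (4 * d) * ((d:ℝ) * ‖x‖ ^ 2) :=
        mul_le_mul_of_nonneg_left hsumsq (by positivity)
      have heq : m / (4 * d) * ((d:ℝ) * ‖x‖ ^ 2) = m / 4 * ‖x‖ ^ 2 := by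
        field_simp
      nlinarith
    have hcS : (Real.sqrt ((2 * Real.pi) ^ d * S.det))⁻¹ ≤ C := by
      rw [hC]
      apply inv_anti₀
      · exact Real.sqrt_pos.2 (mul_pos (pow_pos (by positivity) d)
          (by linarith [hS₀.det_pos]))
      · exact Real.sqrt_le_sqrt (mul_le_mul_of_nonneg_left h2.le (by positivity))
    calc gaussDensity S x
        = (Real.sqrt ((2 * Real.pi) ^ d * S.det))⁻¹
            * Real.exp (-(1 / 2) * (x ⬝ᵥ S⁻¹ *ᵥ x)) := rfl
      _ ≤ C * ∏ i, Real.exp (-(m / (4 * d)) * (x i) ^ 2) := by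
          apply mul_le_mul hcS hexp (Real.exp_pos _).le hCpos.le
      _ = g x := rfl
  · -- finiteness
    refine ne_of_lt (lt_of_le_of_lt (setLIntegral_le_lintegral _ _) ?_)
    rw [← ofReal_integral_eq_lintegral_ofReal hgint
      (Eventually.of_forall hgnonneg)]
    exact ENNReal.ofReal_lt_top
  · exact Eventually.of_forall fun x =>
      tendsto_nhdsWithin_of_tendsto_nhds
        ((ENNReal.continuous_ofReal.continuousAt.comp
          (continuousAt_gaussDensity hS₀ x)).tendsto)

end Cont

section Quantile
variable {d : ℕ} {φ : (Fin d → ℝ) → ℝ} {α : ℝ} {S : Matrix (Fin d) (Fin d) ℝ}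

lemma isOpen_ball (hφ : IsNorm φ) (c : ℝ) : IsOpen {x : Fin d → ℝ | φ x < c} :=
  isOpen_lt hφ.continuous continuous_const

lemma gaussMeasure_le_one (hS : S.PosDef) (A : Set (Fin d → ℝ)) : gaussMeasure S A ≤ 1 := by
  rw [← gaussMeasure_univ hS]; exact measure_mono (subset_univ _)

lemma gaussMeasure_null {A : Set (Fin d → ℝ)} (hA : volume A = 0) : gaussMeasure S A = 0 :=
  (withDensity_absolutelyContinuous volume _) hA

lemma volume_sphere_zero (hφ : IsNorm φ) {c : ℝ} (hc : 0 < c) :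
    volume {x : Fin d → ℝ | φ x = c} = 0 := by
  refine measure_mono_null ?_ ((hφ.convex_ball c).addHaar_frontier volume)
  intro x hx
  simp only [mem_setOf_eq] at hx
  have hxball : x ∉ {y : Fin d → ℝ | φ y < c} := by simp [hx]
  rw [frontier, (isOpen_ball hφ c).interior_eq]
  refine ⟨?_, hxball⟩
  have htend : Tendsto (fun n : ℕ => ((n : ℝ)/(n+1)) • x) atTop (𝓝 x) := by
    have h1 : Tendsto (fun n : ℕ => ((n : ℝ)/((n : ℝ)+1))) atTop (𝓝 1) :=
      tendsto_natCast_div_add_atTop 1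
    simpa using h1.smul_const x
  refine mem_closure_of_tendsto htend (Eventually.of_forall fun n => ?_)
  · simp only [mem_setOf_eq, hφ.smul, hx]
    have h0 : (0:ℝ) ≤ (n : ℝ)/(n+1) := by positivity
    have h1 : (n : ℝ)/(n+1) < 1 := by
      rw [div_lt_one (by positivity)]; linarith
    rw [abs_of_nonneg h0]
    calc (n : ℝ)/(n+1) * c < 1 * c := by exact mul_lt_mul_of_pos_right h1 hc
      _ = c := one_mul c

/-- positivity of the gaussian measure of a nonempty open set -/
lemma gaussMeasure_pos_of_isOpen (hS : S.PosDef) {A : Set (Fin d → ℝ)}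
    (hA : IsOpen A) (hne : A.Nonempty) : 0 < gaussMeasure S A := by
  rw [gaussMeasure, withDensity_apply _ hA.measurableSet]
  have hmeas : Measurable fun x : Fin d → ℝ => ENNReal.ofReal (gaussDensity S x) :=
    (ENNReal.continuous_ofReal.comp (continuous_gaussDensity S)).measurable
  rw [lintegral_pos_iff_support hmeas]
  have hsupp : (Function.support fun x => ENNReal.ofReal (gaussDensity S x)) = univ := by
    refine eq_univ_of_forall fun x => ?_
    simp only [Function.mem_support, ne_eq, ENNReal.ofReal_eq_zero, not_le]
    exact gaussDensity_pos hS x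
  rw [hsupp]
  simpa using hA.measure_pos volume hne

variable (φ α S) in
/-- the defining set of the quantile -/
def Tset : Set ℝ :=
  {c : ℝ | 0 < c ∧ ENNReal.ofReal (1 - α) ≤ gaussMeasure S {t : Fin d → ℝ | φ t < c}}

lemma Tset_bddBelow : BddBelow (Tset φ α S) := ⟨0, fun c hc => hc.1.le⟩

lemma Tset_nonempty (hφ : IsNorm φ) (hα0 : 0 < α) (hα1 : α < 1) (hS : S.PosDef) :
    (Tset φ α S).Nonempty := by
  have hmono : Monotone fun n : ℕ => {t : Fin d → ℝ | φ t < (n : ℝ) + 1} := by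
    intro a b hab x hx
    simp only [mem_setOf_eq] at *
    have : (a : ℝ) ≤ b := by exact_mod_cast hab
    linarith
  have hU : ⋃ n : ℕ, {t : Fin d → ℝ | φ t < (n : ℝ) + 1} = univ := by
    refine eq_univ_of_forall fun x => ?_
    obtain ⟨n, hn⟩ := exists_nat_gt (φ x)
    exact mem_iUnion.2 ⟨n, by simp only [mem_setOf_eq]; linarith⟩
  have ht : Tendsto (fun n : ℕ => gaussMeasure S {t : Fin d → ℝ | φ t < (n : ℝ) + 1})
      atTop (𝓝 1) := by
    have := tendsto_measure_iUnion_atTop (μ := gaussMeasure S) hmono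
    rw [hU, gaussMeasure_univ hS] at this
    exact this
  have hlt : ENNReal.ofReal (1 - α) < 1 := by
    rw [← ENNReal.ofReal_one]
    exact ENNReal.ofReal_lt_ofReal_iff_of_nonneg (by linarith) |>.2 (by linarith)
  obtain ⟨n, hn⟩ := (ht.eventually_const_lt hlt).exists
  exact ⟨(n : ℝ) + 1, by positivity, hn.le⟩

lemma Tset_quantile_pos (hd : 0 < d) (hφ : IsNorm φ) (hα0 : 0 < α) (hα1 : α < 1) (hS : S.PosDef) :
    0 < sInf (Tset φ α S) := by
  haveI : Nonempty (Fin d) := ⟨⟨0, hd⟩⟩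
  have hanti : Antitone fun n : ℕ => {t : Fin d → ℝ | φ t < 1 / ((n : ℝ) + 1)} := by
    intro a b hab x hx
    simp only [mem_setOf_eq] at *
    have hab' : (a : ℝ) ≤ b := by exact_mod_cast hab
    have : 1 / ((b : ℝ) + 1) ≤ 1 / ((a : ℝ) + 1) := by
      apply one_div_le_one_div_of_le <;> linarith
    linarith
  have hI : ⋂ n : ℕ, {t : Fin d → ℝ | φ t < 1 / ((n : ℝ) + 1)} = {(0 : Fin d → ℝ)} := by
    ext x
    simp only [mem_iInter, mem_setOf_eq, mem_singleton_iff]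
    constructor
    · intro h
      by_contra hx
      obtain ⟨n, hn⟩ := exists_nat_one_div_lt (hφ.pos hx)
      exact absurd (h n) (by push_cast; linarith)
    · rintro rfl n
      rw [hφ.zero]
      positivity
  have ht : Tendsto (fun n : ℕ => gaussMeasure S {t : Fin d → ℝ | φ t < 1 / ((n : ℝ) + 1)})
      atTop (𝓝 0) := by
    have h0 : gaussMeasure S {(0 : Fin d → ℝ)} = 0 :=
      gaussMeasure_null (measure_singleton 0)
    have := tendsto_measure_iInter_atTop (μ := gaussMeasure S)
      (fun n => (isOpen_ball hφ _).measurableSet.nullMeasurableSet) hanti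
      ⟨0, ((gaussMeasure_le_one hS _).trans_lt ENNReal.one_lt_top).ne⟩
    rw [hI, h0] at this
    exact this
  have hpos : (0 : ℝ≥0∞) < ENNReal.ofReal (1 - α) := by
    rw [ENNReal.ofReal_pos]; linarith
  obtain ⟨n, hn⟩ := (ht.eventually_lt_const hpos).exists
  have hlb : ∀ c ∈ Tset φ α S, 1 / ((n : ℝ) + 1) ≤ c := by
    intro c hc
    by_contra hlt
    push_neg at hlt
    have hsub : {t : Fin d → ℝ | φ t < c} ⊆ {t : Fin d → ℝ | φ t < 1 / ((n : ℝ) + 1)} :=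
      fun x hx => lt_trans hx hlt
    exact absurd (hc.2.trans (measure_mono hsub)) (not_le.2 hn)
  have : 1 / ((n : ℝ) + 1) ≤ sInf (Tset φ α S) := le_csInf
    (Tset_nonempty hφ hα0 hα1 hS) hlb
  exact lt_of_lt_of_le (by positivity) this

lemma Tset_measure_lt (hφ : IsNorm φ) {c : ℝ} (hc0 : 0 < c)
    (hlt : c < sInf (Tset φ α S)) :
    gaussMeasure S {t : Fin d → ℝ | φ t < c} < ENNReal.ofReal (1 - α) := by
  by_contra h
  push_neg at h
  exact absurd (csInf_le Tset_bddBelow ⟨hc0, h⟩) (not_le.2 hlt)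

lemma le_measure_closedBall (hφ : IsNorm φ) (hα0 : 0 < α) (hα1 : α < 1) (hS : S.PosDef) :
    ENNReal.ofReal (1 - α)
      ≤ gaussMeasure S {t : Fin d → ℝ | φ t ≤ sInf (Tset φ α S)} := by
  set q := sInf (Tset φ α S) with hq
  have hne := Tset_nonempty hφ hα0 hα1 hS
  have hanti : Antitone fun n : ℕ => {t : Fin d → ℝ | φ t < q + 1 / ((n : ℝ) + 1)} := by
    intro a b hab x hx
    simp only [mem_setOf_eq] at *
    have hab' : (a : ℝ) ≤ b := by exact_mod_cast hab
    have : 1 / ((b : ℝ) + 1) ≤ 1 / ((a : ℝ) + 1) := by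
      apply one_div_le_one_div_of_le <;> linarith
    linarith
  have hI : ⋂ n : ℕ, {t : Fin d → ℝ | φ t < q + 1 / ((n : ℝ) + 1)}
      = {t : Fin d → ℝ | φ t ≤ q} := by
    ext x
    simp only [mem_iInter, mem_setOf_eq]
    constructor
    · intro h
      by_contra hx
      push_neg at hx
      obtain ⟨n, hn⟩ := exists_nat_one_div_lt (by linarith : 0 < φ x - q)
      have := h n
      push_cast at hn ⊢
      linarith
    · intro h n
      have : (0:ℝ) < 1 / ((n : ℝ) + 1) := by positivity
      linarith
  have ht : Tendsto (fun n : ℕ => gaussMeasure S {t : Fin d → ℝ | φ t < q + 1 / ((n : ℝ) + 1)})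
      atTop (𝓝 (gaussMeasure S {t : Fin d → ℝ | φ t ≤ q})) := by
    have := tendsto_measure_iInter_atTop (μ := gaussMeasure S)
      (fun n => (isOpen_ball hφ _).measurableSet.nullMeasurableSet) hanti
      ⟨0, ((gaussMeasure_le_one hS _).trans_lt ENNReal.one_lt_top).ne⟩
    rw [hI] at this
    exact this
  refine ge_of_tendsto ht (Eventually.of_forall fun n => ?_)
  have hlt : q < q + 1 / ((n : ℝ) + 1) := by
    have : (0:ℝ) < 1 / ((n : ℝ) + 1) := by positivity
    linarith
  obtain ⟨c, hcT, hcl⟩ := (csInf_lt_iff Tset_bddBelow hne).1 hlt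
  refine hcT.2.trans (measure_mono fun x hx => ?_)
  simp only [mem_setOf_eq] at *
  linarith

lemma Tset_measure_gt (hd : 0 < d) (hφ : IsNorm φ) (hα0 : 0 < α) (hα1 : α < 1)
    (hS : S.PosDef) {ε : ℝ} (hε : 0 < ε) :
    ENNReal.ofReal (1 - α)
      < gaussMeasure S {t : Fin d → ℝ | φ t < sInf (Tset φ α S) + ε} := by
  set q := sInf (Tset φ α S) with hq
  have hq0 : 0 < q := Tset_quantile_pos hd hφ hα0 hα1 hS
  set A : Set (Fin d → ℝ) := {t | q < φ t ∧ φ t < q + ε} with hA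
  have hAopen : IsOpen A :=
    (isOpen_lt continuous_const hφ.continuous).inter (isOpen_lt hφ.continuous continuous_const)
  have hAne : A.Nonempty := by
    have hx0 : (Pi.single (⟨0, hd⟩ : Fin d) (1:ℝ) : Fin d → ℝ) ≠ 0 := by
      intro h
      have := congrFun h ⟨0, hd⟩
      simp at this
    set x₀ : Fin d → ℝ := Pi.single (⟨0, hd⟩ : Fin d) (1:ℝ) with hx₀
    have hφx₀ : 0 < φ x₀ := hφ.pos hx0
    set t : ℝ := (q + ε/2) / φ x₀ with htdef
    have ht : 0 < t := by positivity
    refine ⟨t • x₀, ?_, ?_⟩ <;>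
      simp only [mem_setOf_eq, hφ.smul, abs_of_pos (show 0 < (q + ε/2) / φ x₀ from ht), htdef,
        div_mul_cancel₀ _ hφx₀.ne'] <;> linarith
  have hdecomp : {t : Fin d → ℝ | φ t < q + ε}
      = {t : Fin d → ℝ | φ t ≤ q} ∪ A := by
    ext x
    simp only [mem_setOf_eq, mem_union, hA]
    constructor
    · intro h
      rcases le_or_gt (φ x) q with h' | h'
      · exact Or.inl h'
      · exact Or.inr ⟨h', h⟩
    · rintro (h | ⟨h1, h2⟩)
      · linarith
      · exact h2
  have hdisj : Disjoint {t : Fin d → ℝ | φ t ≤ q} A := by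
    rw [Set.disjoint_left]
    rintro x hx ⟨h1, _⟩
    simp only [mem_setOf_eq] at hx
    linarith
  rw [hdecomp, measure_union hdisj hAopen.measurableSet]
  have h1 := le_measure_closedBall hφ hα0 hα1 hS
  have h2 : 0 < gaussMeasure S A := gaussMeasure_pos_of_isOpen hS hAopen hAne
  calc ENNReal.ofReal (1 - α) ≤ gaussMeasure S {t : Fin d → ℝ | φ t ≤ q} := h1
    _ < gaussMeasure S {t : Fin d → ℝ | φ t ≤ q} + gaussMeasure S A :=
      ENNReal.lt_add_right ((gaussMeasure_le_one hS _).trans_lt ENNReal.one_lt_top).ne h2.ne'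

end Quantile


/-- For any norm `φ` on `ℝ^d` and `α ∈ (0,1)`, the map `Σ ↦ c_α(Σ)` is continuous on the
set of positive definite `d×d` real matrices. -/
theorem gaussQuantile_continuousOn (d : ℕ) (φ : (Fin d → ℝ) → ℝ) (hφ : IsNorm φ)
    (α : ℝ) (hα0 : 0 < α) (hα1 : α < 1) :
    ContinuousOn (gaussQuantile φ α) {S : Matrix (Fin d) (Fin d) ℝ | S.PosDef} := by
  rcases Nat.eq_zero_or_pos d with hd | hd
  · -- dimension zero: the quantile is constant 0
    subst hd
    have hconst : ∀ S : Matrix (Fin 0) (Fin 0) ℝ, gaussQuantile φ α S = 0 := by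
      intro S
      have hdens : ∀ x : Fin 0 → ℝ, gaussDensity S x = 1 := by
        intro x
        rw [gaussDensity, Matrix.det_fin_zero]
        simp [dotProduct]
      have huniv : gaussMeasure S univ = 1 := by
        rw [gaussMeasure, withDensity_apply _ MeasurableSet.univ, Measure.restrict_univ]
        simp_rw [hdens]
        rw [lintegral_const, ENNReal.ofReal_one, one_mul]
        rw [MeasureTheory.volume_pi, Measure.pi_univ]
        simp
      have hset : ∀ c : ℝ, 0 < c → {t : Fin 0 → ℝ | φ t < c} = univ := by
        intro c hc
        refine eq_univ_of_forall fun t => ?_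
        have ht : t = 0 := Subsingleton.elim t 0
        simp only [mem_setOf_eq, ht, hφ.zero]
        exact hc
      have hTeq : {c : ℝ | 0 < c ∧
          ENNReal.ofReal (1 - α) ≤ gaussMeasure S {t : Fin 0 → ℝ | φ t < c}}
          = Ioi (0:ℝ) := by
        ext c
        simp only [mem_setOf_eq, mem_Ioi]
        constructor
        · exact fun h => h.1
        · intro hc
          refine ⟨hc, ?_⟩
          rw [hset c hc, huniv]
          exact ENNReal.ofReal_le_one.2 (by linarith)
      rw [gaussQuantile, hTeq, csInf_Ioi]
    have : gaussQuantile φ α = fun _ : Matrix (Fin 0) (Fin 0) ℝ => (0:ℝ) := funext hconst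
    rw [this]
    exact continuousOn_const
  · intro S₀ hS₀
    have hS₀' : S₀.PosDef := hS₀
    have hqdef : ∀ S : Matrix (Fin d) (Fin d) ℝ, gaussQuantile φ α S = sInf (Tset φ α S) :=
      fun _ => rfl
    set q₀ := gaussQuantile φ α S₀ with hq₀
    have hq₀pos : 0 < q₀ := by rw [hq₀, hqdef]; exact Tset_quantile_pos hd hφ hα0 hα1 hS₀'
    rw [ContinuousWithinAt, Metric.tendsto_nhds]
    intro ε hε
    set ε' : ℝ := min (ε / 2) (q₀ / 2) with hε'def
    have hε'pos : 0 < ε' := lt_min (by linarith) (by linarith)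
    have hε'q : ε' < q₀ := (min_le_right _ _).trans_lt (by linarith)
    have hε'ε : ε' < ε := (min_le_left _ _).trans_lt (by linarith)
    have hlow : gaussMeasure S₀ {t : Fin d → ℝ | φ t < q₀ - ε'}
        < ENNReal.ofReal (1 - α) := by
      refine Tset_measure_lt hφ (by linarith) ?_
      rw [← hqdef, ← hq₀]; linarith
    have hhigh : ENNReal.ofReal (1 - α)
        < gaussMeasure S₀ {t : Fin d → ℝ | φ t < q₀ + ε'} := by
      have := Tset_measure_gt hd hφ hα0 hα1 hS₀' (ε := ε') hε'pos
      rw [← hqdef, ← hq₀] at this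
      exact this
    have hev1 : ∀ᶠ S in 𝓝[{S : Matrix (Fin d) (Fin d) ℝ | S.PosDef}] S₀,
        gaussMeasure S {t : Fin d → ℝ | φ t < q₀ - ε'} < ENNReal.ofReal (1 - α) :=
      (tendsto_gaussMeasure hd hS₀' (isOpen_ball hφ _).measurableSet).eventually_lt_const hlow
    have hev2 : ∀ᶠ S in 𝓝[{S : Matrix (Fin d) (Fin d) ℝ | S.PosDef}] S₀,
        ENNReal.ofReal (1 - α) < gaussMeasure S {t : Fin d → ℝ | φ t < q₀ + ε'} :=
      (tendsto_gaussMeasure hd hS₀' (isOpen_ball hφ _).measurableSet).eventually_const_lt hhigh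
    have hev3 : ∀ᶠ S in 𝓝[{S : Matrix (Fin d) (Fin d) ℝ | S.PosDef}] S₀,
        S ∈ {S : Matrix (Fin d) (Fin d) ℝ | S.PosDef} := eventually_mem_nhdsWithin
    filter_upwards [hev1, hev2, hev3] with S h1 h2 hSP
    have hub : gaussQuantile φ α S ≤ q₀ + ε' := by
      rw [hqdef]
      exact csInf_le Tset_bddBelow ⟨by linarith, h2.le⟩
    have hlb : q₀ - ε' ≤ gaussQuantile φ α S := by
      rw [hqdef]
      refine le_csInf (Tset_nonempty hφ hα0 hα1 hSP) fun c hc => ?_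
      by_contra h
      push_neg at h
      have hsub : {t : Fin d → ℝ | φ t < c} ⊆ {t : Fin d → ℝ | φ t < q₀ - ε'} :=
        fun x hx => lt_trans hx h
      exact absurd (hc.2.trans (measure_mono hsub)) (not_le.2 h1)
    rw [Real.dist_eq, abs_sub_lt_iff]
    constructor <;> linarith
end

section
/- Let B be a nonempty, closed, bounded and centrally symmetric subset of ℝ^d, let Σ be a positive definite d×d real matrix with centered Gaussian density f_Σ, and let h ∈ ℝ^d with h ≠ 0. Then there exists u ∈ ℝ such that {x + h : x ∈ B and f_Σ(x) > u} ≠ {x + h : x ∈ B} ∩ {y ∈ ℝ^d : f_Σ(y) > u}. -/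
open MeasureTheory Matrix Filter
open scoped ENNReal

lemma quad_sym' {d : ℕ} {A : Matrix (Fin d) (Fin d) ℝ} (hA : A.IsHermitian)
    (x y : Fin d → ℝ) : x ⬝ᵥ (A *ᵥ y) = y ⬝ᵥ (A *ᵥ x) := by
  have hAT : Aᵀ = A := by
    have := hA.eq
    rwa [conjTranspose_eq_transpose_of_trivial] at this
  rw [dotProduct_mulVec, ← hAT, vecMul_transpose, dotProduct_comm, hAT]

/-- For a nonempty, closed, bounded, centrally symmetric `B ⊆ ℝ^d`, positive definite `Σ`,
and `h ≠ 0`, there exists a level `u` such that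
`{x + h : x ∈ B, f_Σ(x) > u} ≠ {x + h : x ∈ B} ∩ {y : f_Σ(y) > u}`. -/
theorem exists_level_translate_ne (d : ℕ) (B : Set (Fin d → ℝ))
    (hBne : B.Nonempty) (hBcl : IsClosed B) (hBbd : Bornology.IsBounded B)
    (hBsym : ∀ x ∈ B, -x ∈ B)
    (S : Matrix (Fin d) (Fin d) ℝ) (hS : S.PosDef)
    (h : Fin d → ℝ) (hh : h ≠ 0) :
    ∃ u : ℝ,
      (fun x => x + h) '' {x ∈ B | u < gaussDensity S x}
        ≠ ((fun x => x + h) '' B) ∩ {y : Fin d → ℝ | u < gaussDensity S y} := by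
  have hA : (S⁻¹).PosDef := hS.inv
  have hq : ∀ x : Fin d → ℝ,
      (x + h) ⬝ᵥ (S⁻¹ *ᵥ (x + h)) = x ⬝ᵥ (S⁻¹ *ᵥ x) + 2 * (x ⬝ᵥ (S⁻¹ *ᵥ h)) + h ⬝ᵥ (S⁻¹ *ᵥ h) := by
    intro x
    simp only [mulVec_add, add_dotProduct, dotProduct_add]
    rw [quad_sym' hA.isHermitian h x]
    ring
  have hqh : 0 < h ⬝ᵥ (S⁻¹ *ᵥ h) := by
    have := hA.dotProduct_mulVec_pos hh
    simpa using this
  -- find x in B with different density at x and x+h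
  have key : ∃ x ∈ B, gaussDensity S x ≠ gaussDensity S (x + h) := by
    obtain ⟨x₀, hx₀⟩ := hBne
    by_contra hcon
    push_neg at hcon
    have hc : (0:ℝ) < (Real.sqrt ((2 * Real.pi) ^ d * S.det))⁻¹ := by
      exact inv_pos.2 (Real.sqrt_pos.2 (mul_pos (pow_pos (by positivity) d) hS.det_pos))
    have hqeq : ∀ x ∈ B, x ⬝ᵥ (S⁻¹ *ᵥ x) = (x + h) ⬝ᵥ (S⁻¹ *ᵥ (x + h)) := by
      intro x hx
      have := hcon x hx
      unfold gaussDensity at this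
      have hexp := mul_left_cancel₀ hc.ne' this
      have harg : -(1 / 2 : ℝ) * (x ⬝ᵥ (S⁻¹ *ᵥ x)) = -(1 / 2) * ((x + h) ⬝ᵥ (S⁻¹ *ᵥ (x + h))) :=
        Real.exp_injective hexp
      linarith [harg]
    have e1 := hqeq x₀ hx₀
    have e2 := hqeq (-x₀) (hBsym x₀ hx₀)
    rw [hq x₀] at e1
    rw [hq (-x₀)] at e2
    have : (-x₀) ⬝ᵥ (S⁻¹ *ᵥ (-x₀)) = x₀ ⬝ᵥ (S⁻¹ *ᵥ x₀) := by
      rw [mulVec_neg, neg_dotProduct, dotProduct_neg, neg_neg]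
    rw [this] at e2
    have : (-x₀) ⬝ᵥ (S⁻¹ *ᵥ h) = -(x₀ ⬝ᵥ (S⁻¹ *ᵥ h)) := by
      rw [neg_dotProduct]
    rw [this] at e2
    linarith
  obtain ⟨x, hxB, hne⟩ := key
  rcases lt_or_gt_of_ne hne with hlt | hgt
  · -- f(x) < f(x+h) : take u = f(x); x+h ∈ RHS but not LHS
    refine ⟨gaussDensity S x, fun heq => ?_⟩
    have hmem : x + h ∈ ((fun x => x + h) '' B) ∩ {y | gaussDensity S x < gaussDensity S y} :=
      ⟨⟨x, hxB, rfl⟩, hlt⟩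
    rw [← heq] at hmem
    obtain ⟨y, ⟨_, hy2⟩, hyeq⟩ := hmem
    have : y = x := by
      have := hyeq
      simpa using add_right_cancel this
    rw [this] at hy2
    exact lt_irrefl _ hy2
  · -- f(x) > f(x+h) : take u = f(x+h); x+h ∈ LHS but not RHS
    refine ⟨gaussDensity S (x + h), fun heq => ?_⟩
    have hmem : x + h ∈ (fun x => x + h) '' {z ∈ B | gaussDensity S (x + h) < gaussDensity S z} :=
      ⟨x, ⟨hxB, hgt⟩, rfl⟩
    rw [heq] at hmem
    have h2 : gaussDensity S (x + h) < gaussDensity S (x + h) := hmem.2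
    exact lt_irrefl _ h2
end
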